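/- Let G be a finite group with subgroups H and H', let α be a finite-dimensional complex representation of H and α' a finite-dimensional complex representation of H', and set ψ = Ind_H^G α and ψ' = Ind_{H'}^G α'. If ⟨ᾱ ⊗ ψ|_H, 1_H⟩_H = ⟨ᾱ' ⊗ ψ|_{H'}, 1_{H'}⟩_{H'} and ⟨ᾱ ⊗ ψ'|_H, 1_H⟩_H = ⟨ᾱ' ⊗ ψ'|_{H'}, 1_{H'}⟩_{H'}, then ψ and ψ' are isomorphic. Here ᾱ, ᾱ' denote dual representations, 1_H, 1_{H'} trivial representations, and restriction is denoted by |. -/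

import Mathlib

open scoped Classical

/-- The class function on `G` induced from a function `χ` on a subgroup `H`:
`(Ind_H^G χ)(g) = (1/|H|) · Σ_{x ∈ G, x⁻¹gx ∈ H} χ(x⁻¹gx)`. -/
noncomputable def indFn {G : Type*} [Group G] (H : Subgroup G) (χ : H → ℂ) : G → ℂ :=
  fun g => (Nat.card H : ℂ)⁻¹ *
    ∑ᶠ x : G, if h : x⁻¹ * g * x ∈ H then χ ⟨x⁻¹ * g * x, h⟩ else 0

/-- The inner product of two class functions on a finite group `G`:
`⟨χ, χ'⟩_G = (1/|G|) · Σ_{g ∈ G} χ(g) · conj(χ'(g))`. -/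
noncomputable def innerFn {G : Type*} [Group G] (χ χ' : G → ℂ) : ℂ :=
  (Nat.card G : ℂ)⁻¹ * ∑ᶠ g : G, χ g * (starRingEnd ℂ) (χ' g)

open Complex Finset

lemma sum_prim_pow {n : ℕ} {ζ : ℂ} (hζ : IsPrimitiveRoot ζ n) (m : ℕ) :
    ∑ k ∈ Finset.range n, (ζ ^ m) ^ k = if n ∣ m then (n : ℂ) else 0 := by
  by_cases h : n ∣ m
  · rw [if_pos h, (hζ.pow_eq_one_iff_dvd m).mpr h]
    simp
  · rw [if_neg h]
    have h1 : ζ ^ m ≠ 1 := fun hh => h ((hζ.pow_eq_one_iff_dvd m).mp hh)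
    rw [geom_sum_eq h1 n, ← pow_mul, mul_comm, pow_mul, hζ.pow_eq_one, one_pow,
      sub_self, zero_div]

lemma pow_eq_pow_of_modEq' {M : Type*} [Monoid M] {x : M} {n a b : ℕ} (hx : x ^ n = 1)
    (h : a ≡ b [MOD n]) : x ^ a = x ^ b := by
  rcases le_total a b with hab | hab
  · obtain ⟨k, hk⟩ := (Nat.modEq_iff_dvd' hab).mp h
    have : b = a + n * k := by omega
    rw [this, pow_add, pow_mul, hx, one_pow, mul_one]
  · obtain ⟨k, hk⟩ := (Nat.modEq_iff_dvd' hab).mp h.symm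
    have : a = b + n * k := by omega
    rw [this, pow_add, pow_mul, hx, one_pow, mul_one]

lemma dvd_iff_eq {n m j : ℕ} (hm : m < n) (hj : j < n) :
    n ∣ m + j * (n - 1) ↔ j = m := by
  have hn : 1 ≤ n := by omega
  have key : ((m + j * (n - 1) : ℕ) : ℤ) = ((m : ℤ) - j) + j * n := by
    push_cast [Nat.cast_sub hn]
    ring
  rw [← Int.natCast_dvd_natCast, key]
  constructor
  · intro h
    have h'' : (n : ℤ) ∣ ((m : ℤ) - j) := by
      have heq : ((m : ℤ) - j) = (((m : ℤ) - j) + j * n) - n * j := by ring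
      rw [heq]
      exact dvd_sub h ⟨j, rfl⟩
    have := Int.eq_zero_of_abs_lt_dvd h'' (by rw [abs_lt]; constructor <;> omega)
    omega
  · rintro rfl
    exact ⟨j, by ring⟩

lemma trace_pow_pred {V : Type*} [AddCommGroup V] [Module ℂ V] [FiniteDimensional ℂ V]
    (f : Module.End ℂ V) (n : ℕ) (hn : 0 < n) (hf : f ^ n = 1) :
    LinearMap.trace ℂ V (f ^ (n - 1)) = (starRingEnd ℂ) (LinearMap.trace ℂ V f) := by
  rcases eq_or_lt_of_le (show 1 ≤ n from hn) with h1 | h1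
  · -- n = 1 : then f = 1
    have hn1 : n = 1 := h1.symm
    subst hn1
    rw [pow_one] at hf
    subst hf
    simp
  · -- 1 < n
    have hne : NeZero n := ⟨hn.ne'⟩
    have hnC : (n : ℂ) ≠ 0 := Nat.cast_ne_zero.mpr hn.ne'
    set ζ : ℂ := Complex.exp (2 * Real.pi * Complex.I / n) with hζdef
    have hζ : IsPrimitiveRoot ζ n := Complex.isPrimitiveRoot_exp n hn.ne'
    have hζ1 : ζ ^ n = 1 := hζ.pow_eq_one
    -- conj ζ = ζ ^ (n - 1)
    have hconjζ : (starRingEnd ℂ) ζ = ζ ^ (n - 1) := by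
      have h1' : (starRingEnd ℂ) ζ = ζ⁻¹ := by
        rw [hζdef, ← Complex.exp_conj, ← Complex.exp_neg]
        rw [map_div₀, map_mul, map_mul, Complex.conj_I, Complex.conj_ofReal, map_natCast,
          map_ofNat]
        ring
      have h2' : ζ * ζ ^ (n - 1) = 1 := by
        rw [← pow_succ']
        have : n - 1 + 1 = n := by omega
        rw [this, hζ1]
      rw [h1', inv_eq_of_mul_eq_one_right h2']
    -- the projections (unnormalized)
    set S : ℕ → Module.End ℂ V := fun k => ∑ j : Fin n, ζ ^ (j.val * k * (n - 1)) • f ^ j.val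
      with hSdef
    -- periodicity helper
    have hG : ∀ k a b : ℕ, a ≡ b [MOD n] →
        ζ ^ (a * k * (n - 1)) • f ^ a = ζ ^ (b * k * (n - 1)) • f ^ b := by
      intro k a b hab
      rw [pow_eq_pow_of_modEq' hζ1 ((hab.mul_right k).mul_right (n-1)),
        pow_eq_pow_of_modEq' hf hab]
    -- S k is (n times) an idempotent
    have hSS : ∀ k, S k * S k = (n : ℂ) • S k := by
      intro k
      rw [hSdef]
      rw [Finset.sum_mul_sum]
      have step : ∀ j : Fin n, ∑ l : Fin n,
          (ζ ^ (j.val * k * (n-1)) • f ^ j.val) * (ζ ^ (l.val * k * (n-1)) • f ^ l.val)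
          = ∑ l : Fin n, ζ ^ (l.val * k * (n-1)) • f ^ l.val := by
        intro j
        have per : ∀ l : Fin n,
            (ζ ^ (j.val * k * (n-1)) • f ^ j.val) * (ζ ^ (l.val * k * (n-1)) • f ^ l.val)
            = ζ ^ (((j + l : Fin n).val) * k * (n-1)) • f ^ ((j + l : Fin n).val) := by
          intro l
          rw [smul_mul_assoc, mul_smul_comm, smul_smul, ← pow_add, ← pow_add]
          have harith : j.val * k * (n-1) + l.val * k * (n-1) = (j.val + l.val) * k * (n-1) := by
            ring
          rw [harith]
          have hmod : (j.val + l.val) ≡ ((j + l : Fin n).val) [MOD n] := by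
            rw [Fin.add_def]
            exact (Nat.mod_modEq _ n).symm
          exact hG k _ _ hmod
        calc ∑ l : Fin n, (ζ ^ (j.val * k * (n-1)) • f ^ j.val) * (ζ ^ (l.val * k * (n-1)) • f ^ l.val)
            = ∑ l : Fin n, ζ ^ (((j + l : Fin n).val) * k * (n-1)) • f ^ ((j + l : Fin n).val) := by
              exact Finset.sum_congr rfl fun l _ => per l
          _ = ∑ l : Fin n, ζ ^ (l.val * k * (n-1)) • f ^ l.val := by
              exact Fintype.sum_equiv (Equiv.addLeft j) _ _ (fun l => rfl)
      calc (∑ j : Fin n, ∑ l : Fin n,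
          (ζ ^ (j.val * k * (n-1)) • f ^ j.val) * (ζ ^ (l.val * k * (n-1)) • f ^ l.val))
          = ∑ _j : Fin n, ∑ l : Fin n, ζ ^ (l.val * k * (n-1)) • f ^ l.val := by
            exact Finset.sum_congr rfl fun j _ => step j
        _ = (n : ℂ) • ∑ l : Fin n, ζ ^ (l.val * k * (n-1)) • f ^ l.val := by
            rw [Finset.sum_const, Finset.card_univ, Fintype.card_fin]
            rw [← Nat.cast_smul_eq_nsmul ℂ]
    -- trace of each normalized S k is a natural number
    have hPr : ∀ k, ∃ r : ℕ, LinearMap.trace ℂ V ((n : ℂ)⁻¹ • S k) = (r : ℂ) := by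
      intro k
      have hidem : ((n : ℂ)⁻¹ • S k) ∘ₗ ((n : ℂ)⁻¹ • S k) = (n : ℂ)⁻¹ • S k := by
        rw [← Module.End.mul_eq_comp, smul_mul_smul_comm, hSS k, smul_smul]
        congr 1
        field_simp
      obtain ⟨p, hp⟩ := (LinearMap.isProj_iff_isIdempotentElem _).mpr hidem
      exact ⟨Module.finrank ℂ p, hp.trace⟩
    -- decomposition of powers of f
    have hdecomp : ∀ m : ℕ, m < n →
        ∑ k : Fin n, ζ ^ (m * k.val) • ((n : ℂ)⁻¹ • S k.val) = f ^ m := by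
      intro m hm
      have expand : ∀ k : Fin n, ζ ^ (m * k.val) • S k.val
          = ∑ j : Fin n, ζ ^ ((m + j.val * (n-1)) * k.val) • f ^ j.val := by
        intro k
        rw [hSdef, Finset.smul_sum]
        refine Finset.sum_congr rfl fun j _ => ?_
        rw [smul_smul, ← pow_add]
        congr 1
        ring
      have swap : ∑ k : Fin n, ζ ^ (m * k.val) • S k.val
          = ∑ j : Fin n, (∑ k : Fin n, (ζ ^ (m + j.val * (n-1))) ^ k.val) • f ^ j.val := by
        rw [Finset.sum_congr rfl fun k _ => expand k, Finset.sum_comm]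
        refine Finset.sum_congr rfl fun j _ => ?_
        rw [← Finset.sum_smul]
        congr 1
        exact Finset.sum_congr rfl fun k _ => by rw [← pow_mul]
      have inner : ∀ j : Fin n, (∑ k : Fin n, (ζ ^ (m + j.val * (n-1))) ^ k.val)
          = if j.val = m then (n : ℂ) else 0 := by
        intro j
        rw [Fin.sum_univ_eq_sum_range (fun k => (ζ ^ (m + j.val * (n-1))) ^ k) n]
        rw [sum_prim_pow hζ]
        rw [if_congr (dvd_iff_eq hm j.isLt) rfl rfl]
      have collapse : ∑ j : Fin n, (if j.val = m then (n:ℂ) else 0) • f ^ j.val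
          = (n : ℂ) • f ^ m := by
        have e : ∀ j : Fin n, (if j.val = m then (n:ℂ) else 0) • f ^ j.val
            = if j = ⟨m, hm⟩ then (n:ℂ) • f ^ j.val else 0 := by
          intro j
          rw [ite_smul, zero_smul]
          exact if_congr ⟨fun h => Fin.ext h, fun h => by rw [h]⟩ rfl rfl
        rw [Finset.sum_congr rfl fun j _ => e j,
          Finset.sum_ite_eq' Finset.univ (⟨m, hm⟩ : Fin n) (fun j => (n:ℂ) • f ^ j.val)]
        simp
      calc ∑ k : Fin n, ζ ^ (m * k.val) • ((n : ℂ)⁻¹ • S k.val)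
          = (n : ℂ)⁻¹ • ∑ k : Fin n, ζ ^ (m * k.val) • S k.val := by
            rw [Finset.smul_sum]
            exact Finset.sum_congr rfl fun k _ => smul_comm _ _ _
        _ = (n : ℂ)⁻¹ • ((n : ℂ) • f ^ m) := by
            rw [swap, Finset.sum_congr rfl fun j _ => by rw [inner j], collapse]
        _ = f ^ m := by rw [smul_smul, inv_mul_cancel₀ hnC, one_smul]
    -- take traces
    choose r hr using hPr
    have htr : ∀ m : ℕ, m < n → LinearMap.trace ℂ V (f ^ m)
        = ∑ k : Fin n, ζ ^ (m * k.val) * (r k.val : ℂ) := by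
      intro m hm
      rw [← hdecomp m hm, map_sum]
      exact Finset.sum_congr rfl fun k _ => by rw [map_smul, hr k.val, smul_eq_mul]
    have ht1 := htr 1 h1
    have htn := htr (n - 1) (by omega)
    rw [pow_one] at ht1
    rw [htn, ht1, map_sum]
    refine Finset.sum_congr rfl fun k _ => ?_
    rw [one_mul, map_mul, map_natCast, map_pow, hconjζ, ← pow_mul]

lemma char_inv_eq_conj {K : Type} [Group K] [Finite K] (V : FDRep ℂ K) (g : K) :
    V.character g⁻¹ = (starRingEnd ℂ) (V.character g) := by
  have hn : 0 < orderOf g := orderOf_pos g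
  have hg : g ^ orderOf g = 1 := pow_orderOf_eq_one g
  have hinv : g⁻¹ = g ^ (orderOf g - 1) := by
    refine inv_eq_of_mul_eq_one_right ?_
    rw [← pow_succ']
    have : orderOf g - 1 + 1 = orderOf g := by omega
    rw [this, hg]
  have hρ : (V.ρ g) ^ orderOf g = 1 := by
    rw [← map_pow, hg, map_one]
  calc V.character g⁻¹ = LinearMap.trace ℂ V ((V.ρ g) ^ (orderOf g - 1)) := by
        rw [FDRep.character, hinv, map_pow]
    _ = (starRingEnd ℂ) (LinearMap.trace ℂ V (V.ρ g)) :=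
        trace_pow_pred (V.ρ g) (orderOf g) hn hρ
    _ = (starRingEnd ℂ) (V.character g) := rfl

section IndLemmas

variable {G : Type} [Group G] [Fintype G]

lemma sum_dite_mem (H : Subgroup G) (F : H → ℂ) :
    ∑ g : G, (if h : g ∈ H then F ⟨g, h⟩ else 0) = ∑ x : H, F x := by
  rw [← Finset.sum_filter_of_ne (p := (· ∈ H))
    (fun x _ hx => by by_contra hc; exact hx (dif_neg hc))]
  rw [Finset.sum_subtype (p := (· ∈ H)) (Finset.univ.filter (· ∈ H)) (fun x => by simp) _]
  exact Finset.sum_congr rfl fun x _ => by rw [dif_pos x.2]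

lemma indFn_sum (H : Subgroup G) (χ : H → ℂ) (g : G) :
    indFn H χ g = (Nat.card H : ℂ)⁻¹ *
      ∑ x : G, (if h : x⁻¹ * g * x ∈ H then χ ⟨x⁻¹ * g * x, h⟩ else 0) := by
  rw [indFn, finsum_eq_sum_of_fintype]

lemma indFn_classFn (H : Subgroup G) (χ : H → ℂ) (x g : G) :
    indFn H χ (x * g * x⁻¹) = indFn H χ g := by
  rw [indFn_sum, indFn_sum]
  congr 1
  refine (Fintype.sum_equiv (Equiv.mulLeft x) _ _ fun y => ?_).symm
  simp only [Equiv.coe_mulLeft]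
  have : (x * y)⁻¹ * (x * g * x⁻¹) * (x * y) = y⁻¹ * g * y := by group
  simp only [this]

lemma indFn_inv (H : Subgroup G) (χ : H → ℂ) (hχ : ∀ x : H, χ x⁻¹ = (starRingEnd ℂ) (χ x))
    (g : G) : indFn H χ g⁻¹ = (starRingEnd ℂ) (indFn H χ g) := by
  rw [indFn_sum, indFn_sum, map_mul, map_inv₀, map_natCast, map_sum]
  congr 1
  refine Finset.sum_congr rfl fun x _ => ?_
  have e : x⁻¹ * g⁻¹ * x = (x⁻¹ * g * x)⁻¹ := by group
  by_cases h : x⁻¹ * g * x ∈ H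
  · rw [dif_pos h]
    have h' : x⁻¹ * g⁻¹ * x ∈ H := by rw [e]; exact inv_mem h
    rw [dif_pos h']
    have : (⟨x⁻¹ * g⁻¹ * x, h'⟩ : H) = (⟨x⁻¹ * g * x, h⟩ : H)⁻¹ := by
      ext; simp [e]
    rw [this, hχ]
  · rw [dif_neg h, dif_neg (by rw [e]; exact fun hc => h (by simpa using inv_mem hc)), map_zero]

lemma frob (H : Subgroup G) (χ : H → ℂ) (θ : G → ℂ)
    (hθ : ∀ x g : G, θ (x * g * x⁻¹) = θ g) :
    (Nat.card H : ℂ)⁻¹ * ∑ x : H, χ x⁻¹ * θ (x : G) =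
    (Nat.card G : ℂ)⁻¹ * ∑ g : G, indFn H χ g⁻¹ * θ g := by
  have hGcard : (Nat.card G : ℂ) ≠ 0 := Nat.cast_ne_zero.mpr Nat.card_pos.ne'
  -- RHS computation
  have step1 : ∀ x : G, ∑ g : G,
      (if h : (x⁻¹ * g⁻¹ * x) ∈ H then χ ⟨x⁻¹ * g⁻¹ * x, h⟩ else 0) * θ g
      = ∑ x : H, χ x * θ ((x : G)⁻¹) := by
    intro x
    let e : G ≃ G := (Equiv.inv G).trans ((Equiv.mulLeft x).trans (Equiv.mulRight x⁻¹))
    rw [← sum_dite_mem H (fun y : H => χ y * θ ((y : G)⁻¹))]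
    refine (Fintype.sum_equiv e _ _ fun g => ?_).symm
    have he : e g = x * g⁻¹ * x⁻¹ := rfl
    have harg : x⁻¹ * (e g)⁻¹ * x = g := by rw [he]; group
    have hθg : θ (e g) = θ g⁻¹ := by rw [he]; exact hθ x g⁻¹
    rw [harg, hθg]
    by_cases h : g ∈ H
    · rw [dif_pos h, dif_pos h, mul_comm]
    · rw [dif_neg h, dif_neg h, zero_mul]
  symm
  calc (Nat.card G : ℂ)⁻¹ * ∑ g : G, indFn H χ g⁻¹ * θ g
      = (Nat.card G : ℂ)⁻¹ * ∑ g : G, (Nat.card H : ℂ)⁻¹ *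
          ∑ x : G, ((if h : (x⁻¹ * g⁻¹ * x) ∈ H then χ ⟨x⁻¹ * g⁻¹ * x, h⟩ else 0) * θ g) := by
        congr 1
        refine Finset.sum_congr rfl fun g _ => ?_
        rw [indFn_sum, mul_assoc]
        congr 1
        rw [Finset.sum_mul]
    _ = (Nat.card G : ℂ)⁻¹ * ((Nat.card H : ℂ)⁻¹ *
          ∑ g : G, ∑ x : G, ((if h : (x⁻¹ * g⁻¹ * x) ∈ H then χ ⟨x⁻¹ * g⁻¹ * x, h⟩ else 0) * θ g)) := by
        rw [← Finset.mul_sum]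
    _ = (Nat.card G : ℂ)⁻¹ * ((Nat.card H : ℂ)⁻¹ *
          ∑ x : G, ∑ g : G, ((if h : (x⁻¹ * g⁻¹ * x) ∈ H then χ ⟨x⁻¹ * g⁻¹ * x, h⟩ else 0) * θ g)) := by
        rw [Finset.sum_comm]
    _ = (Nat.card G : ℂ)⁻¹ * ((Nat.card H : ℂ)⁻¹ *
          ∑ _x : G, ∑ y : H, χ y * θ ((y : G)⁻¹)) := by
        rw [Finset.sum_congr rfl fun x _ => step1 x]
    _ = (Nat.card H : ℂ)⁻¹ * ∑ y : H, χ y * θ ((y : G)⁻¹) := by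
        rw [Finset.sum_const, Finset.card_univ, nsmul_eq_mul, Nat.card_eq_fintype_card]
        field_simp
    _ = (Nat.card H : ℂ)⁻¹ * ∑ x : H, χ x⁻¹ * θ (x : G) := by
        congr 1
        refine Fintype.sum_equiv (Equiv.inv H) _ _ fun y => ?_
        simp [Equiv.inv]

end IndLemmas

lemma innerFn_one {K : Type} [Group K] [Fintype K] (χ : K → ℂ) :
    innerFn χ (fun _ => 1) = (Nat.card K : ℂ)⁻¹ * ∑ x : K, χ x := by
  rw [innerFn, finsum_eq_sum_of_fintype]
  simp


/-- Let `ψ = Ind_H^G α` and `ψ' = Ind_{H'}^G α'`. If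
`⟨ᾱ ⊗ ψ|_H, 1_H⟩_H = ⟨ᾱ' ⊗ ψ|_{H'}, 1_{H'}⟩_{H'}` and
`⟨ᾱ ⊗ ψ'|_H, 1_H⟩_H = ⟨ᾱ' ⊗ ψ'|_{H'}, 1_{H'}⟩_{H'}`,
then `ψ` and `ψ'` are isomorphic (equality of induced characters). Here duals have
characters `x ↦ χ(x⁻¹)`, tensor products have product characters, and the trivial
representations have character constantly `1`. -/
theorem ind_char_eq_of_inner_products_eq {G : Type} [Group G] [Fintype G]
    (H H' : Subgroup G) (α : FDRep ℂ H) (α' : FDRep ℂ H')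
    (h1 : innerFn (G := H)
        (fun x => α.character x⁻¹ * indFn H (fun y => α.character y) (x : G)) (fun _ => 1) =
      innerFn (G := H')
        (fun x => α'.character x⁻¹ * indFn H (fun y => α.character y) (x : G)) (fun _ => 1))
    (h2 : innerFn (G := H)
        (fun x => α.character x⁻¹ * indFn H' (fun y => α'.character y) (x : G)) (fun _ => 1) =
      innerFn (G := H')
        (fun x => α'.character x⁻¹ * indFn H' (fun y => α'.character y) (x : G)) (fun _ => 1)) :
    indFn H (fun x => α.character x) = indFn H' (fun x => α'.character x) := by
  set χα : H → ℂ := fun x => α.character x with hχα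
  set χα' : H' → ℂ := fun x => α'.character x with hχα'
  set ψ : G → ℂ := indFn H χα with hψ
  set ψ' : G → ℂ := indFn H' χα' with hψ'
  have hGcard : (Nat.card G : ℂ) ≠ 0 := Nat.cast_ne_zero.mpr Nat.card_pos.ne'
  have hψcl : ∀ x g : G, ψ (x * g * x⁻¹) = ψ g := fun x g => indFn_classFn H χα x g
  have hψ'cl : ∀ x g : G, ψ' (x * g * x⁻¹) = ψ' g := fun x g => indFn_classFn H' χα' x g
  have hχαc : ∀ x : H, χα x⁻¹ = (starRingEnd ℂ) (χα x) := fun x => char_inv_eq_conj α x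
  have hχα'c : ∀ x : H', χα' x⁻¹ = (starRingEnd ℂ) (χα' x) := fun x => char_inv_eq_conj α' x
  have hψc : ∀ g : G, ψ g⁻¹ = (starRingEnd ℂ) (ψ g) := indFn_inv H χα hχαc
  have hψ'c : ∀ g : G, ψ' g⁻¹ = (starRingEnd ℂ) (ψ' g) := indFn_inv H' χα' hχα'c
  -- rewrite hypotheses via Frobenius reciprocity
  rw [innerFn_one, innerFn_one, frob H χα ψ hψcl, frob H' χα' ψ hψcl] at h1
  rw [innerFn_one, innerFn_one, frob H χα ψ' hψ'cl, frob H' χα' ψ' hψ'cl] at h2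
  have e1 : ∑ g : G, ψ g⁻¹ * ψ g = ∑ g : G, ψ' g⁻¹ * ψ g :=
    mul_left_cancel₀ (inv_ne_zero hGcard) h1
  have e2 : ∑ g : G, ψ g⁻¹ * ψ' g = ∑ g : G, ψ' g⁻¹ * ψ' g :=
    mul_left_cancel₀ (inv_ne_zero hGcard) h2
  simp only [hψc, hψ'c] at e1 e2
  -- positivity argument
  have E0 : ∑ g : G, (ψ g - ψ' g) * (starRingEnd ℂ) (ψ g - ψ' g) = 0 := by
    have expand : ∑ g : G, (ψ g - ψ' g) * (starRingEnd ℂ) (ψ g - ψ' g)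
        = (∑ g : G, ((starRingEnd ℂ) (ψ g) * ψ g - (starRingEnd ℂ) (ψ' g) * ψ g))
          - ∑ g : G, ((starRingEnd ℂ) (ψ g) * ψ' g - (starRingEnd ℂ) (ψ' g) * ψ' g) := by
      rw [← Finset.sum_sub_distrib]
      refine Finset.sum_congr rfl fun g _ => ?_
      rw [map_sub]
      ring
    rw [expand, Finset.sum_sub_distrib, Finset.sum_sub_distrib, e1, e2]
    ring
  have hzero : ∀ g : G, ψ g - ψ' g = 0 := by
    have hreal : ∑ g : G, Complex.normSq (ψ g - ψ' g) = 0 := by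
      have : ((∑ g : G, Complex.normSq (ψ g - ψ' g) : ℝ) : ℂ) = 0 := by
        rw [← E0]
        push_cast
        exact Finset.sum_congr rfl fun g _ => (Complex.mul_conj _).symm
      exact_mod_cast this
    intro g
    have := (Finset.sum_eq_zero_iff_of_nonneg
      (fun g _ => Complex.normSq_nonneg (ψ g - ψ' g))).mp hreal g (Finset.mem_univ g)
    exact Complex.normSq_eq_zero.mp this
  funext g
  have := hzero g
  rw [sub_eq_zero] at this
  exact this
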